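/- Pre-Lie (left-symmetric) algebras do not satisfy the Dong property: there exist a left-symmetric algebra A over ℚ with product μ, pairwise mutually μ-local formal distributions a, b, c over A, and n ∈ ℕ such that at least one of the ordered pairs (a ∘_{μ,n} b, c), (c, a ∘_{μ,n} b) is not μ-local. -/

import Mathlib

/-- The ordered pair of formal distributions `(a, b)` over `A` is `μ`-local:
there is `N` with `(w - z)^N μ(a(w), b(z)) = 0`, encoded coefficient-wise. -/
def IsLocalPair {A : Type*} [AddCommGroup A] (μ : A → A → A) (a b : ℤ → A) : Prop :=
  ∃ N : ℕ, ∀ m p : ℤ,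
    ∑ s ∈ Finset.range (N + 1),
      ((-1 : ℤ) ^ s * (N.choose s : ℤ)) • μ (a (m + (N : ℤ) - (s : ℤ))) (b (p + (s : ℤ))) = 0

/-- The `n`-th `μ`-product `a ∘_{μ,n} b` of formal distributions,
encoding `Res_{ξ=0} (ξ - w)^n μ(a(ξ), b(w))`. -/
def NthProduct {A : Type*} [AddCommGroup A] (μ : A → A → A) (n : ℕ) (a b : ℤ → A) : ℤ → A :=
  fun m => ∑ j ∈ Finset.range (n + 1),
    ((-1 : ℤ) ^ j * (n.choose j : ℤ)) • μ (a ((n : ℤ) - (j : ℤ))) (b (m + (j : ℤ)))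

/-- Three formal distributions `a, b, c` are pairwise mutually `μ`-local. -/
def PairwiseMutuallyLocal {A : Type*} [AddCommGroup A] (μ : A → A → A) (a b c : ℤ → A) : Prop :=
  IsLocalPair μ a b ∧ IsLocalPair μ b a ∧ IsLocalPair μ a c ∧ IsLocalPair μ c a ∧
    IsLocalPair μ b c ∧ IsLocalPair μ c b

/-- `μ : A → A → A` is `k`-bilinear. -/
def IsBilinear (k : Type*) [Field k] {A : Type*} [AddCommGroup A] [Module k A]
    (μ : A → A → A) : Prop :=
  (∀ x y z : A, μ (x + y) z = μ x z + μ y z) ∧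
    (∀ x y z : A, μ x (y + z) = μ x y + μ x z) ∧
    (∀ (r : k) (x y : A), μ (r • x) y = r • μ x y) ∧
    (∀ (r : k) (x y : A), μ x (r • y) = r • μ x y)

noncomputable section PreLieCounterexampleAux

/-- Laurent polynomials over `ℚ`. -/
abbrev PLieL : Type := AddMonoidAlgebra ℚ ℤ

/-- The carrier of the counterexample pre-Lie algebra. -/
abbrev PLieA : Type := PLieL × PLieL × PLieL × ℚ × ℚ

/-- Evaluation at `2` (a linear functional with exponential behaviour). -/
def PLiephi : PLieL →ₗ[ℚ] ℚ :=
  (Finsupp.lsum ℚ fun k => LinearMap.toSpanSingleton ℚ ℚ ((2:ℚ)^k)) ∘ₗ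
    (AddMonoidAlgebra.coeffLinearEquiv ℚ).toLinearMap

lemma PLiephi_single (k : ℤ) (r : ℚ) : PLiephi (AddMonoidAlgebra.single k r) = r * 2^k := by
  unfold PLiephi
  exact (Finsupp.lsum_single ℚ (fun k : ℤ => LinearMap.toSpanSingleton ℚ ℚ ((2:ℚ)^k)) k r).trans
    (by rw [LinearMap.toSpanSingleton_apply, smul_eq_mul])

/-- The left-symmetric product. -/
def PLiemu (u v : PLieA) : PLieA :=
  (0, 0, u.1 * v.2.1 + u.2.1 * v.1, 0, v.2.2.2.1 * PLiephi u.2.2.1)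

def PLa : ℤ → PLieA := fun i => (AddMonoidAlgebra.single i 1, 0, 0, 0, 0)
def PLb : ℤ → PLieA := fun j => (0, AddMonoidAlgebra.single j 1, 0, 0, 0)
def PLc : ℤ → PLieA := fun _ => (0, 0, 0, 1, 0)

lemma PLmu_ab (i j : ℤ) : PLiemu (PLa i) (PLb j) = (0, 0, AddMonoidAlgebra.single (i+j) 1, 0, 0) := by
  simp only [PLiemu, PLa, PLb, mul_zero, zero_mul, add_zero, map_zero]
  rw [AddMonoidAlgebra.single_mul_single, mul_one]

lemma PLmu_ba (j i : ℤ) : PLiemu (PLb j) (PLa i) = (0, 0, AddMonoidAlgebra.single (i+j) 1, 0, 0) := by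
  simp only [PLiemu, PLa, PLb, mul_zero, zero_mul, zero_add, map_zero]
  rw [AddMonoidAlgebra.single_mul_single, mul_one, add_comm j i]

lemma PLmu_ac (i p : ℤ) : PLiemu (PLa i) (PLc p) = 0 := by
  simp only [PLiemu, PLa, PLc, mul_zero, zero_mul, add_zero, map_zero]
  rfl

lemma PLmu_ca (p i : ℤ) : PLiemu (PLc p) (PLa i) = 0 := by
  simp only [PLiemu, PLa, PLc, mul_zero, zero_mul, add_zero, map_zero]
  rfl

lemma PLmu_bc (j p : ℤ) : PLiemu (PLb j) (PLc p) = 0 := by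
  simp only [PLiemu, PLb, PLc, mul_zero, zero_mul, add_zero, map_zero]
  rfl

lemma PLmu_cb (p j : ℤ) : PLiemu (PLc p) (PLb j) = 0 := by
  simp only [PLiemu, PLb, PLc, mul_zero, zero_mul, add_zero, zero_add, map_zero]
  rfl

lemma PLbilinear : IsBilinear ℚ PLiemu := by
  refine ⟨?_, ?_, ?_, ?_⟩ <;> intro x y z <;>
    simp only [PLiemu, Prod.ext_iff, Prod.fst_add, Prod.snd_add, Prod.smul_fst, Prod.smul_snd,
      Prod.mk_add_mk, Prod.smul_mk, map_add, map_smul, smul_eq_mul, smul_zero, add_zero,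
      smul_mul_assoc, mul_smul_comm, smul_add] <;>
    simp only [true_and] <;> and_intros <;> ring

lemma PLleftSym : ∀ x y z : PLieA,
    PLiemu (PLiemu x y) z - PLiemu x (PLiemu y z) =
      PLiemu (PLiemu y x) z - PLiemu y (PLiemu x z) := by
  intro x y z
  have h : x.1 * y.2.1 + x.2.1 * y.1 = y.1 * x.2.1 + y.2.1 * x.1 := by ring
  simp only [PLiemu, zero_mul, mul_zero, add_zero, zero_add, map_zero, h]

def PLpi5 : PLieA →+ ℚ where
  toFun u := u.2.2.2.2
  map_zero' := rfl
  map_add' _ _ := rfl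

lemma PLprod (k : ℤ) : NthProduct PLiemu 0 PLa PLb k = (0, 0, AddMonoidAlgebra.single k 1, 0, 0) := by
  simp only [NthProduct]
  rw [Finset.sum_range_one]
  norm_num [PLmu_ab]

lemma PLmu_dc (k p : ℤ) :
    PLiemu ((0, 0, AddMonoidAlgebra.single k 1, 0, 0) : PLieA) (PLc p) = (0, 0, 0, 0, (2:ℚ)^k) := by
  simp only [PLiemu, PLc, mul_zero, zero_mul, add_zero, PLiephi_single, one_mul]

end PreLieCounterexampleAux

/-- Pre-Lie (left-symmetric) algebras do not satisfy the Dong property. -/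
theorem preLie_not_dong_property :
    ∃ (A : Type) (_ : AddCommGroup A) (_ : Module ℚ A) (μ : A → A → A),
      IsBilinear ℚ μ ∧
      (∀ x y z : A, μ (μ x y) z - μ x (μ y z) = μ (μ y x) z - μ y (μ x z)) ∧
      ∃ a b c : ℤ → A, PairwiseMutuallyLocal μ a b c ∧
        ∃ n : ℕ,
          ¬ IsLocalPair μ (NthProduct μ n a b) c ∨
          ¬ IsLocalPair μ c (NthProduct μ n a b) := by
  refine ⟨PLieA, inferInstance, inferInstance, PLiemu, PLbilinear, PLleftSym,
    PLa, PLb, PLc, ⟨?_, ?_, ?_, ?_, ?_, ?_⟩, 0, Or.inl ?_⟩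
  · -- (a, b) local with N = 1
    refine ⟨1, fun m p => ?_⟩
    rw [Finset.sum_range_succ, Finset.sum_range_one]
    simp only [PLmu_ab]
    norm_num
    rw [show m + 1 + p = m + (p + 1) from by ring]
    simp
  · -- (b, a) local with N = 1
    refine ⟨1, fun m p => ?_⟩
    rw [Finset.sum_range_succ, Finset.sum_range_one]
    simp only [PLmu_ba]
    norm_num
    rw [show p + (m + 1) = p + 1 + m from by ring]
    simp
  · exact ⟨0, fun m p => by simp [Finset.sum_range_one, PLmu_ac]⟩
  · exact ⟨0, fun m p => by simp [Finset.sum_range_one, PLmu_ca]⟩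
  · exact ⟨0, fun m p => by simp [Finset.sum_range_one, PLmu_bc]⟩
  · exact ⟨0, fun m p => by simp [Finset.sum_range_one, PLmu_cb]⟩
  · -- non-locality of (a ∘₀ b, c)
    rintro ⟨N, h⟩
    have h0 := h 0 0
    have h5 := congrArg PLpi5 h0
    rw [map_sum, map_zero] at h5
    have h6 : ∀ s ∈ Finset.range (N + 1),
        PLpi5 (((-1 : ℤ) ^ s * (N.choose s : ℤ)) •
          PLiemu (NthProduct PLiemu 0 PLa PLb ((0:ℤ) + (N : ℤ) - (s : ℤ))) (PLc ((0:ℤ) + (s:ℤ))))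
        = (-1 : ℚ) ^ s * (N.choose s : ℚ) * 2 ^ (N - s) := by
      intro s hs
      have hsN : s ≤ N := Nat.lt_succ_iff.mp (Finset.mem_range.mp hs)
      rw [map_zsmul, PLprod, PLmu_dc]
      have he : (0:ℤ) + (N : ℤ) - (s : ℤ) = ((N - s : ℕ) : ℤ) := by
        push_cast [Nat.cast_sub hsN]; ring
      have : PLpi5 ((0, 0, 0, 0, (2:ℚ) ^ ((0:ℤ) + (N : ℤ) - (s : ℤ))) : PLieA)
          = (2:ℚ) ^ ((0:ℤ) + (N : ℤ) - (s : ℤ)) := rfl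
      rw [this, he, zpow_natCast, zsmul_eq_mul]
      push_cast
      ring
    rw [Finset.sum_congr rfl h6] at h5
    have h7 : ∑ s ∈ Finset.range (N + 1), (-1 : ℚ) ^ s * (N.choose s : ℚ) * 2 ^ (N - s) = 1 := by
      have hb := add_pow (-1 : ℚ) 2 N
      norm_num at hb
      conv_rhs => rw [hb]
      exact Finset.sum_congr rfl fun s _ => by ring
    rw [h7] at h5
    exact one_ne_zero h5
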